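/- For all natural numbers a, b and every integer d with a + b + d ≥ 0, the function (ξ,η,ζ) ↦ ξ^a η^b (1−ζ)^d (integer power of (1−ζ), well defined for ζ < 1) is Lebesgue integrable on K̂ and ∫_{K̂} ξ^a η^b (1−ζ)^d d(ξ,η,ζ) = 1/((a+1)(b+1)(a+b+d+3)). -/

import Mathlib

open MeasureTheory

noncomputable section

/-- The reference pyramid K̂ ⊂ ℝ³ (coordinates (ξ, η, ζ)). -/
def Khat : Set (ℝ × ℝ × ℝ) :=
  {p | 0 ≤ p.2.2 ∧ p.2.2 ≤ 1 ∧ 0 ≤ p.1 ∧ p.1 ≤ 1 - p.2.2 ∧ 0 ≤ p.2.1 ∧ p.2.1 ≤ 1 - p.2.2}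

/-- The rotated pyramid, with ζ first. -/
def Khat' : Set (ℝ × ℝ × ℝ) :=
  {p | 0 ≤ p.1 ∧ p.1 ≤ 1 ∧ 0 ≤ p.2.1 ∧ p.2.1 ≤ 1 - p.1 ∧ 0 ≤ p.2.2 ∧ p.2.2 ≤ 1 - p.1}

lemma measurable_zpow_real (d : ℤ) : Measurable fun x : ℝ => x ^ d := by
  rcases d with n | n
  · simpa using (measurable_id.pow_const n : Measurable fun x : ℝ => x ^ n)
  · simp only [zpow_negSucc]
    exact ((measurable_id.pow_const (n + 1) : Measurable fun x : ℝ => x ^ (n + 1))).inv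

lemma pow_mul_zpow_eq (x : ℝ) (m : ℕ) (d : ℤ) (hm : m ≠ 0) (hd : 0 < (m : ℤ) + d) :
    x ^ m * x ^ d = x ^ ((m : ℤ) + d).toNat := by
  rcases eq_or_ne x 0 with rfl | hx
  · rw [zero_pow hm, zero_mul, zero_pow]
    omega
  · rw [← zpow_natCast x m, ← zpow_add₀ hx, ← zpow_natCast x (((m : ℤ) + d).toNat)]
    congr 1
    omega

lemma pow_mul_zpow_le_one (x : ℝ) (hx0 : 0 ≤ x) (hx1 : x ≤ 1) (m : ℕ) (d : ℤ)
    (hd : 0 ≤ (m : ℤ) + d) : x ^ m * x ^ d ≤ 1 := by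
  rcases eq_or_ne x 0 with rfl | hx
  · rcases eq_or_ne m 0 with rfl | hm
    · rcases eq_or_ne d 0 with rfl | hd0
      · norm_num
      · simp [zero_zpow d hd0]
    · simp [zero_pow hm]
  · have hx' : 0 < x := lt_of_le_of_ne hx0 (Ne.symm hx)
    rw [← zpow_natCast x m, ← zpow_add₀ hx]
    have : (m : ℤ) + d = (((m : ℤ) + d).toNat : ℤ) := by omega
    rw [this, zpow_natCast]
    exact pow_le_one₀ hx0 hx1

lemma bound_one (m1 m2 : ℕ) (d : ℤ) (hd : 0 ≤ (m1 : ℤ) + m2 + d)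
    (x y z : ℝ) (hz0 : 0 ≤ z) (hz1 : z ≤ 1) (hx0 : 0 ≤ x) (hx : x ≤ 1 - z)
    (hy0 : 0 ≤ y) (hy : y ≤ 1 - z) :
    ‖x ^ m1 * y ^ m2 * (1 - z) ^ d‖ ≤ 1 := by
  have h1 : (0:ℝ) ≤ 1 - z := by linarith
  have h2 : (1:ℝ) - z ≤ 1 := by linarith
  have hzp : 0 ≤ (1 - z) ^ d := zpow_nonneg h1 d
  rw [Real.norm_eq_abs, abs_of_nonneg (by positivity)]
  calc x ^ m1 * y ^ m2 * (1 - z) ^ d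
      ≤ (1 - z) ^ m1 * (1 - z) ^ m2 * (1 - z) ^ d := by
        gcongr
    _ = (1 - z) ^ (m1 + m2) * (1 - z) ^ d := by rw [pow_add]
    _ ≤ 1 := pow_mul_zpow_le_one _ h1 h2 _ d (by push_cast; omega)

lemma measurableSet_Khat : MeasurableSet Khat := by
  have : Khat = {p : ℝ × ℝ × ℝ | 0 ≤ p.2.2} ∩ {p | p.2.2 ≤ 1} ∩ {p | 0 ≤ p.1}
      ∩ {p | p.1 ≤ 1 - p.2.2} ∩ {p | 0 ≤ p.2.1} ∩ {p | p.2.1 ≤ 1 - p.2.2} := by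
    ext p; simp [Khat]; tauto
  rw [this]
  have m1 : Measurable fun p : ℝ × ℝ × ℝ => p.1 := measurable_fst
  have m2 : Measurable fun p : ℝ × ℝ × ℝ => p.2.1 := measurable_snd.fst
  have m3 : Measurable fun p : ℝ × ℝ × ℝ => p.2.2 := measurable_snd.snd
  refine (((((measurableSet_le measurable_const m3).inter
    (measurableSet_le m3 measurable_const)).inter
    (measurableSet_le measurable_const m1)).inter
    (measurableSet_le m1 ((measurable_const.sub m3)))).inter
    (measurableSet_le measurable_const m2)).inter
    (measurableSet_le m2 ((measurable_const.sub m3)))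

lemma measurableSet_Khat' : MeasurableSet Khat' := by
  have : Khat' = {p : ℝ × ℝ × ℝ | 0 ≤ p.1} ∩ {p | p.1 ≤ 1} ∩ {p | 0 ≤ p.2.1}
      ∩ {p | p.2.1 ≤ 1 - p.1} ∩ {p | 0 ≤ p.2.2} ∩ {p | p.2.2 ≤ 1 - p.1} := by
    ext p; simp [Khat']; tauto
  rw [this]
  have m1 : Measurable fun p : ℝ × ℝ × ℝ => p.1 := measurable_fst
  have m2 : Measurable fun p : ℝ × ℝ × ℝ => p.2.1 := measurable_snd.fst
  have m3 : Measurable fun p : ℝ × ℝ × ℝ => p.2.2 := measurable_snd.snd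
  refine (((((measurableSet_le measurable_const m1).inter
    (measurableSet_le m1 measurable_const)).inter
    (measurableSet_le measurable_const m2)).inter
    (measurableSet_le m2 ((measurable_const.sub m1)))).inter
    (measurableSet_le measurable_const m3)).inter
    (measurableSet_le m3 ((measurable_const.sub m1)))

lemma volume_Khat_lt_top : volume Khat < ⊤ := by
  have hsub : Khat ⊆ Set.Icc 0 1 ×ˢ (Set.Icc 0 1 ×ˢ Set.Icc (0:ℝ) 1) := by
    rintro ⟨x, y, z⟩ ⟨h1, h2, h3, h4, h5, h6⟩
    exact ⟨⟨h3, by linarith⟩, ⟨h5, by linarith⟩, ⟨h1, h2⟩⟩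
  calc volume Khat ≤ _ := measure_mono hsub
    _ < ⊤ := by
      rw [Measure.volume_eq_prod, Measure.prod_prod, Measure.volume_eq_prod, Measure.prod_prod]
      simp [Real.volume_Icc]

lemma volume_Khat'_lt_top : volume Khat' < ⊤ := by
  have hsub : Khat' ⊆ Set.Icc 0 1 ×ˢ (Set.Icc 0 1 ×ˢ Set.Icc (0:ℝ) 1) := by
    rintro ⟨z, x, y⟩ ⟨h1, h2, h3, h4, h5, h6⟩
    exact ⟨⟨h1, h2⟩, ⟨h3, by linarith⟩, ⟨h5, by linarith⟩⟩
  calc volume Khat' ≤ _ := measure_mono hsub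
    _ < ⊤ := by
      rw [Measure.volume_eq_prod, Measure.prod_prod, Measure.volume_eq_prod, Measure.prod_prod]
      simp [Real.volume_Icc]

lemma measurable_f (a b : ℕ) (d : ℤ) :
    Measurable fun p : ℝ × ℝ × ℝ => p.1 ^ a * p.2.1 ^ b * (1 - p.2.2) ^ d :=
  ((measurable_fst.pow_const a).mul (measurable_snd.fst.pow_const b)).mul
    ((measurable_zpow_real d).comp (measurable_const.sub measurable_snd.snd))

lemma measurable_g (a b : ℕ) (d : ℤ) :
    Measurable fun p : ℝ × ℝ × ℝ => p.2.1 ^ a * p.2.2 ^ b * (1 - p.1) ^ d :=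
  ((measurable_snd.fst.pow_const a).mul (measurable_snd.snd.pow_const b)).mul
    ((measurable_zpow_real d).comp (measurable_const.sub measurable_fst))

lemma integrableOn_f (a b : ℕ) (d : ℤ) (hd : 0 ≤ (a : ℤ) + b + d) :
    IntegrableOn (fun p : ℝ × ℝ × ℝ => p.1 ^ a * p.2.1 ^ b * (1 - p.2.2) ^ d) Khat volume := by
  apply Measure.integrableOn_of_bounded (M := 1) volume_Khat_lt_top.ne
    (measurable_f a b d).aestronglyMeasurable
  refine (ae_restrict_iff' measurableSet_Khat).2 (ae_of_all _ ?_)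
  rintro ⟨x, y, z⟩ ⟨h1, h2, h3, h4, h5, h6⟩
  exact bound_one a b d hd x y z h1 h2 h3 h4 h5 h6

lemma integrableOn_g (a b : ℕ) (d : ℤ) (hd : 0 ≤ (a : ℤ) + b + d) :
    IntegrableOn (fun p : ℝ × ℝ × ℝ => p.2.1 ^ a * p.2.2 ^ b * (1 - p.1) ^ d) Khat' volume := by
  apply Measure.integrableOn_of_bounded (M := 1) volume_Khat'_lt_top.ne
    (measurable_g a b d).aestronglyMeasurable
  refine (ae_restrict_iff' measurableSet_Khat').2 (ae_of_all _ ?_)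
  rintro ⟨z, x, y⟩ ⟨h1, h2, h3, h4, h5, h6⟩
  exact bound_one a b d hd x y z h1 h2 h3 h4 h5 h6

/-- The rotation map (ζ, ξ, η) ↦ (ξ, η, ζ) as a measurable equiv. -/
def rot : (ℝ × ℝ × ℝ) ≃ᵐ (ℝ × ℝ × ℝ) :=
  (MeasurableEquiv.prodComm : ℝ × (ℝ × ℝ) ≃ᵐ (ℝ × ℝ) × ℝ).trans (MeasurableEquiv.prodAssoc)

lemma rot_measurePreserving : MeasurePreserving (rot : ℝ × ℝ × ℝ → ℝ × ℝ × ℝ) volume volume := by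
  have h1 : MeasurePreserving (Prod.swap : ℝ × (ℝ × ℝ) → (ℝ × ℝ) × ℝ)
      ((volume : Measure ℝ).prod (volume : Measure (ℝ × ℝ)))
      ((volume : Measure (ℝ × ℝ)).prod (volume : Measure ℝ)) := Measure.measurePreserving_swap
  have h2 := MeasureTheory.volume_preserving_prodAssoc (α₁ := ℝ) (β₁ := ℝ) (γ₁ := ℝ)
  have : MeasurePreserving (rot : ℝ × ℝ × ℝ → ℝ × ℝ × ℝ)
      ((volume : Measure ℝ).prod (volume : Measure (ℝ × ℝ))) volume := by
    have h1' : MeasurePreserving (Prod.swap : ℝ × (ℝ × ℝ) → (ℝ × ℝ) × ℝ)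
        ((volume : Measure ℝ).prod (volume : Measure (ℝ × ℝ)))
        (volume : Measure ((ℝ × ℝ) × ℝ)) := by
      rw [Measure.volume_eq_prod]; exact h1
    have hco : (rot : ℝ × ℝ × ℝ → ℝ × ℝ × ℝ) =
        (MeasurableEquiv.prodAssoc : (ℝ × ℝ) × ℝ ≃ᵐ ℝ × ℝ × ℝ) ∘ (Prod.swap) := rfl
    rw [hco]
    exact h2.comp h1'
  rw [Measure.volume_eq_prod]
  exact this

lemma rot_preimage : (rot : ℝ × ℝ × ℝ → ℝ × ℝ × ℝ) ⁻¹' Khat = Khat' := by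
  ext ⟨z, x, y⟩
  simp only [Set.mem_preimage, rot, MeasurableEquiv.trans_apply, Khat, Khat', Set.mem_setOf_eq]
  constructor <;> (intro h; exact ⟨h.1, h.2.1, h.2.2.1, h.2.2.2.1, h.2.2.2.2.1, h.2.2.2.2.2⟩)

lemma transfer (a b : ℕ) (d : ℤ) :
    ∫ p in Khat, p.1 ^ a * p.2.1 ^ b * (1 - p.2.2) ^ d =
    ∫ p in Khat', p.2.1 ^ a * p.2.2 ^ b * (1 - p.1) ^ d := by
  rw [← rot_measurePreserving.setIntegral_preimage_emb
    (MeasurableEquiv.measurableEmbedding rot)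
    (fun p : ℝ × ℝ × ℝ => p.1 ^ a * p.2.1 ^ b * (1 - p.2.2) ^ d) Khat, rot_preimage]
  refine setIntegral_congr_fun measurableSet_Khat' (fun p _ => ?_)
  rcases p with ⟨z, x, y⟩
  rfl

lemma setIntegral_pow_Icc (t : ℝ) (ht : 0 ≤ t) (m : ℕ) :
    ∫ x in Set.Icc (0:ℝ) t, x ^ m = t ^ (m + 1) / (m + 1) := by
  rw [MeasureTheory.integral_Icc_eq_integral_Ioc, ← intervalIntegral.integral_of_le ht,
    integral_pow]
  simp

theorem stmt_2 (a b : ℕ) (d : ℤ) (hd : 0 ≤ (a : ℤ) + b + d) :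
    IntegrableOn
      (fun p : ℝ × ℝ × ℝ => p.1 ^ a * p.2.1 ^ b * (1 - p.2.2) ^ d) Khat volume ∧
    ∫ p in Khat, p.1 ^ a * p.2.1 ^ b * (1 - p.2.2) ^ d =
      1 / (((a : ℝ) + 1) * ((b : ℝ) + 1) * ((a : ℝ) + (b : ℝ) + (d : ℝ) + 3)) := by
  refine ⟨integrableOn_f a b d hd, ?_⟩
  rw [transfer a b d]
  set n : ℕ := ((a : ℤ) + b + d).toNat with hn
  have hnd : ((n : ℤ)) = (a : ℤ) + b + d := by omega
  -- rewrite as integral of indicator over the whole space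
  set g : ℝ × ℝ × ℝ → ℝ := fun p => p.2.1 ^ a * p.2.2 ^ b * (1 - p.1) ^ d with hg
  have hint : Integrable (Khat'.indicator g) volume := by
    rw [integrable_indicator_iff measurableSet_Khat']
    exact integrableOn_g a b d hd
  have key : ∫ p in Khat', g p = ∫ p : ℝ × ℝ × ℝ, Khat'.indicator g p := by
    rw [integral_indicator measurableSet_Khat']
  rw [key]
  rw [Measure.volume_eq_prod] at hint ⊢
  rw [MeasureTheory.integral_prod _ hint]
  -- inner integral computation
  have hslice : ∀ z : ℝ,
      (∫ q : ℝ × ℝ, Khat'.indicator g (z, q)) =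
      (Set.Icc (0:ℝ) 1).indicator
        (fun z => (1 - z) ^ (a + 1) / (a + 1) * ((1 - z) ^ (b + 1) / (b + 1) * (1 - z) ^ d)) z := by
    intro z
    by_cases hz : z ∈ Set.Icc (0:ℝ) 1
    · have h1z : 0 ≤ 1 - z := by simpa using hz.2
      have heq : ∀ q : ℝ × ℝ, Khat'.indicator g (z, q) =
          (Set.Icc (0:ℝ) (1-z) ×ˢ Set.Icc (0:ℝ) (1-z)).indicator
            (fun q : ℝ × ℝ => q.1 ^ a * (q.2 ^ b * (1 - z) ^ d)) q := by
        rintro ⟨x, y⟩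
        by_cases hmem : (x, y) ∈ Set.Icc (0:ℝ) (1-z) ×ˢ Set.Icc (0:ℝ) (1-z)
        · obtain ⟨⟨hx0, hx1⟩, hy0, hy1⟩ := hmem
          rw [Set.indicator_of_mem (by exact ⟨hz.1, hz.2, hx0, hx1, hy0, hy1⟩),
            Set.indicator_of_mem (by exact ⟨⟨hx0, hx1⟩, hy0, hy1⟩)]
          simp [hg, mul_assoc]
        · rw [Set.indicator_of_notMem, Set.indicator_of_notMem hmem]
          rintro ⟨_, _, hx0, hx1, hy0, hy1⟩
          exact hmem ⟨⟨hx0, hx1⟩, hy0, hy1⟩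
      rw [Set.indicator_of_mem hz]
      simp_rw [heq]
      rw [integral_indicator ((measurableSet_Icc).prod (measurableSet_Icc)),
        Measure.volume_eq_prod,
        setIntegral_prod_mul (fun x : ℝ => x ^ a) (fun y : ℝ => y ^ b * (1 - z) ^ d)]
      rw [setIntegral_pow_Icc _ h1z a]
      have : ∫ y in Set.Icc (0:ℝ) (1-z), y ^ b * (1 - z) ^ d =
          (∫ y in Set.Icc (0:ℝ) (1-z), y ^ b) * (1 - z) ^ d := by
        rw [integral_mul_const]
      rw [this, setIntegral_pow_Icc _ h1z b]
    · rw [Set.indicator_of_notMem hz]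
      have : ∀ q : ℝ × ℝ, Khat'.indicator g (z, q) = 0 := by
        intro q
        apply Set.indicator_of_notMem
        intro hmem
        exact hz ⟨hmem.1, hmem.2.1⟩
      simp_rw [this]
      simp
  simp_rw [hslice]
  rw [integral_indicator measurableSet_Icc]
  have hexp : ∀ z ∈ Set.Icc (0:ℝ) 1,
      (1 - z) ^ (a + 1) / (a + 1) * ((1 - z) ^ (b + 1) / (b + 1) * (1 - z) ^ d) =
      (1 - z) ^ (n + 2) / ((a + 1) * (b + 1)) := by
    intro z hz
    have : (1 - z) ^ (a + 1) * ((1 - z) ^ (b + 1) * (1 - z) ^ d) = (1 - z) ^ (n + 2) := by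
      rw [← mul_assoc, ← pow_add]
      have := pow_mul_zpow_eq (1 - z) (a + 1 + (b + 1)) d (by omega) (by push_cast; omega)
      rw [this]
      congr 1
      omega
    conv_lhs => rw [div_mul_eq_mul_div ((1 - z) ^ (b + 1)) ((b:ℝ) + 1) ((1 - z) ^ d)]
    rw [div_mul_div_comm, this]
  rw [setIntegral_congr_fun measurableSet_Icc hexp]
  have : ∫ z in Set.Icc (0:ℝ) 1, (1 - z) ^ (n + 2) / ((a + 1 : ℝ) * (b + 1)) =
      (∫ z in Set.Icc (0:ℝ) 1, (1 - z) ^ (n + 2)) / ((a + 1 : ℝ) * (b + 1)) := by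
    simp_rw [div_eq_mul_inv]
    rw [integral_mul_const]
  rw [this]
  have hz : ∫ z in Set.Icc (0:ℝ) 1, (1 - z) ^ (n + 2) = 1 / (n + 3) := by
    rw [MeasureTheory.integral_Icc_eq_integral_Ioc,
      ← intervalIntegral.integral_of_le (by norm_num : (0:ℝ) ≤ 1)]
    rw [intervalIntegral.integral_comp_sub_left (fun x => x ^ (n + 2)) 1]
    simp only [sub_self, sub_zero]
    rw [integral_pow]
    norm_num
    ring
  rw [hz]
  have hnr : ((n : ℝ)) = (a : ℝ) + b + d := by
    exact_mod_cast congrArg (Int.cast : ℤ → ℝ) hnd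
  rw [hnr]
  have h1 : ((a : ℝ) + 1) ≠ 0 := by positivity
  have h2 : ((b : ℝ) + 1) ≠ 0 := by positivity
  have h3 : ((a : ℝ) + b + d + 3) ≠ 0 := by
    have : (0:ℝ) ≤ (a : ℝ) + b + d := by exact_mod_cast hd
    linarith
  field_simp
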